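/- Let f(z) = λ(z + αz̄^{n-1}) with n ≥ 3 odd, λⁿ = 1, α ≠ 0 complex. After the scaling z → sz with s̄^{n-1}/s = 1/(nα), the n-th power satisfies (f(z))ⁿ = zⁿ + (zz̄)^{n-1} + O(|z|^{2n-1}). -/

import Mathlib

open Complex Filter Asymptotics

/-- For `f(z) = λ(z + α z̄^{n-1})` with `n ≥ 3` odd, `λⁿ = 1`, `α ≠ 0`: after the
scaling `z ↦ sz` with `s̄^{n-1}/s = 1/(nα)` (the scaled map being `z ↦ f(sz)/s`), the
`n`-th power satisfies `(f(sz)/s)ⁿ = zⁿ + (z z̄)^{n-1} + O(|z|^{2n-1})` as `z → 0`. -/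
lemma mono_bigO (a b N : ℕ) (C : ℂ) (h : N ≤ a + b) :
    (fun z : ℂ => C * z^a * (starRingEnd ℂ z)^b) =O[nhds (0:ℂ)] (fun z : ℂ => ‖z‖^N) := by
  rw [Asymptotics.isBigO_iff]
  refine ⟨‖C‖, ?_⟩
  filter_upwards [Metric.ball_mem_nhds (0:ℂ) one_pos] with z hz
  simp only [Metric.mem_ball, dist_zero_right] at hz
  have hz0 : 0 ≤ ‖z‖ := norm_nonneg z
  have h1 : ‖C * z^a * (starRingEnd ℂ z)^b‖ = ‖C‖ * ‖z‖^(a+b) := by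
    simp [norm_mul, norm_pow, pow_add]; ring
  rw [h1, norm_pow, norm_norm]
  exact mul_le_mul_of_nonneg_left (pow_le_pow_of_le_one hz0 hz.le h) (norm_nonneg C)

theorem stmt12 (n : ℕ) (hn : 3 ≤ n) (hodd : Odd n) (lam α s : ℂ)
    (hlam : lam^n = 1) (hα : α ≠ 0) (hs : s ≠ 0)
    (hscale : (starRingEnd ℂ s)^(n-1) / s = 1/(n*α)) :
    (fun z : ℂ =>
        (lam * (z + α * ((starRingEnd ℂ) (s*z))^(n-1) / s))^n
          - z^n - (z * (starRingEnd ℂ) z)^(n-1))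
      =O[nhds (0:ℂ)] (fun z : ℂ => ‖z‖^(2*n-1)) := by
  obtain ⟨m, rfl⟩ : ∃ m, n = m + 3 := ⟨n - 3, by omega⟩
  set n := m + 3 with hn'
  have hn0 : (n:ℂ) ≠ 0 := Nat.cast_ne_zero.mpr (by omega)
  have hc : α * (starRingEnd ℂ s)^(n-1) / s = 1/n := by
    rw [mul_div_assoc, hscale]
    field_simp
  have key : ∀ z : ℂ,
      (lam * (z + α * ((starRingEnd ℂ) (s*z))^(n-1) / s))^n
          - z^n - (z * (starRingEnd ℂ) z)^(n-1)
      = ∑ k ∈ Finset.range (m+2),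
          ((1/(n:ℂ))^(n-k) * (n.choose k)) * z^k * (starRingEnd ℂ z)^((n-1)*(n-k)) := by
    intro z
    have h1 : α * ((starRingEnd ℂ) (s*z))^(n-1) / s
        = (1/(n:ℂ)) * (starRingEnd ℂ z)^(n-1) := by
      rw [map_mul, mul_pow, ← hc]; ring
    rw [h1, mul_pow, hlam, one_mul, add_pow]
    rw [show n + 1 = (m+2) + 1 + 1 from rfl, Finset.sum_range_succ, Finset.sum_range_succ]
    have e1 : z ^ (m + 2 + 1) * ((1/(n:ℂ)) * (starRingEnd ℂ z)^(n-1)) ^ (n - (m+2+1))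
        * (n.choose (m+2+1)) = z ^ n := by
      simp [hn']
    have e2 : z ^ (m + 2) * ((1/(n:ℂ)) * (starRingEnd ℂ z)^(n-1)) ^ (n - (m+2))
        * (n.choose (m+2)) = (z * (starRingEnd ℂ) z)^(n-1) := by
      have hch : n.choose (m+2) = n := Nat.choose_succ_self_right (m+2)
      rw [hch, show n - (m+2) = 1 by omega, pow_one, mul_pow,
        show n - 1 = m + 2 by omega]
      field_simp
    rw [e1, e2]
    have e3 : ∀ k ∈ Finset.range (m+2),
        z ^ k * ((1/(n:ℂ)) * (starRingEnd ℂ z)^(n-1)) ^ (n-k) * (n.choose k)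
        = ((1/(n:ℂ))^(n-k) * (n.choose k)) * z^k * (starRingEnd ℂ z)^((n-1)*(n-k)) := by
      intro k hk
      rw [mul_pow, ← pow_mul]
      ring
    rw [Finset.sum_congr rfl e3]
    ring
  have := funext key
  rw [this]
  apply Asymptotics.IsBigO.fun_sum
  intro k hk
  apply mono_bigO
  have hk' : k ≤ m + 1 := by have := Finset.mem_range.mp hk; omega
  obtain ⟨j, hj2⟩ : ∃ j, n - k = j + 2 := ⟨n - k - 2, by omega⟩
  have hkj : k + j = m + 1 := by omega
  rw [hj2, show n - 1 = m + 2 by omega, show 2*n - 1 = 2*m + 5 by omega]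
  nlinarith [hkj]
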